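/- Let ξ be a real random variable, 𝒢 a sub-σ-field, ε > 0 and s > 2. If E[|ξ|^s e^{ξ⁺/ε} | 𝒢] ≤ ε^{s-2} E[ξ² | 𝒢] almost surely, then E[ξ² | 𝒢] ≤ ε² almost surely. -/

import Mathlib

open MeasureTheory

private lemma sakhanenko_ptwise {ε s : ℝ} (hε : 0 < ε) (hs : 2 < s) (x : ℝ) :
    x ^ 2 ≤ 2 / s * ε ^ (2 - s) * (|x| ^ s * Real.exp (max x 0 / ε)) + (1 - 2 / s) * ε ^ 2 := by
  have hs0 : 0 < s := by linarith
  have hconj : Real.HolderConjugate (s / 2) (s / (s - 2)) := by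
    rw [Real.holderConjugate_iff]; constructor
    · rw [lt_div_iff₀ (by norm_num : (0:ℝ) < 2)]; linarith
    · rw [inv_div, inv_div]
      field_simp
      ring
  have ha : (0:ℝ) ≤ x ^ 2 / ε ^ 2 := by positivity
  have hyoung := Real.young_inequality_of_nonneg ha (zero_le_one) hconj
  rw [mul_one, Real.one_rpow] at hyoung
  have hkey : (x ^ 2 / ε ^ 2) ^ (s / 2) = |x| ^ s / ε ^ s := by
    rw [Real.div_rpow (by positivity) (by positivity)]
    congr 1
    · have h : x ^ 2 = |x| ^ (2:ℝ) := by rw [Real.rpow_two, sq_abs]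
      rw [h, ← Real.rpow_mul (abs_nonneg x)]
      congr 1; ring
    · have h : ε ^ 2 = ε ^ (2:ℝ) := by rw [Real.rpow_two]
      rw [h, ← Real.rpow_mul hε.le]
      congr 1; ring
  rw [hkey] at hyoung
  have hε2 : (0:ℝ) < ε ^ 2 := by positivity
  have hεs : (0:ℝ) < ε ^ s := Real.rpow_pos_of_pos hε s
  have h2s : ε ^ (2 - s) = ε ^ 2 / ε ^ s := by
    rw [Real.rpow_sub hε, Real.rpow_two]
  have hexp : (1:ℝ) ≤ Real.exp (max x 0 / ε) :=
    Real.one_le_exp (by positivity)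
  have hxs : (0:ℝ) ≤ |x| ^ s := Real.rpow_nonneg (abs_nonneg x) s
  have h1 : 2 / s * ε ^ (2 - s) * |x| ^ s ≤ 2 / s * ε ^ (2 - s) * (|x| ^ s * Real.exp (max x 0 / ε)) := by
    have hc : (0:ℝ) ≤ 2 / s * ε ^ (2 - s) := by positivity
    apply mul_le_mul_of_nonneg_left _ hc
    nlinarith
  have hq : 1 / (s / (s - 2)) = 1 - 2 / s := by
    rw [one_div, inv_div]
    field_simp
  have h3 : x ^ 2 ≤ 2 / s * ε ^ (2 - s) * |x| ^ s + (1 - 2 / s) * ε ^ 2 := by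
    rw [h2s]
    calc x ^ 2 = x ^ 2 / ε ^ 2 * ε ^ 2 := by field_simp
      _ ≤ (|x| ^ s / ε ^ s / (s / 2) + 1 / (s / (s - 2))) * ε ^ 2 :=
          mul_le_mul_of_nonneg_right hyoung hε2.le
      _ = 2 / s * (ε ^ 2 / ε ^ s) * |x| ^ s + (1 - 2 / s) * ε ^ 2 := by
          rw [hq]; field_simp
  linarith

theorem condExp_sq_le_of_sakhanenko
    {Ω : Type*} {m0 : MeasurableSpace Ω} (μ : Measure Ω) [IsProbabilityMeasure μ]
    (G : MeasurableSpace Ω) (hG : G ≤ m0)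
    (ξ : Ω → ℝ) (ε s : ℝ) (hε : 0 < ε) (hs : 2 < s)
    (hint1 : Integrable (fun ω => (ξ ω) ^ 2) μ)
    (hint2 : Integrable (fun ω => |ξ ω| ^ s * Real.exp (max (ξ ω) 0 / ε)) μ)
    (hyp : ∀ᵐ ω ∂μ,
      (μ[fun ω => |ξ ω| ^ s * Real.exp (max (ξ ω) 0 / ε)|G]) ω
        ≤ ε ^ (s - 2) * (μ[fun ω => (ξ ω) ^ 2|G]) ω) :
    ∀ᵐ ω ∂μ, (μ[fun ω => (ξ ω) ^ 2|G]) ω ≤ ε ^ 2 := by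
  set f : Ω → ℝ := fun ω => |ξ ω| ^ s * Real.exp (max (ξ ω) 0 / ε) with hf
  set c : ℝ := 2 / s * ε ^ (2 - s) with hc
  have hs0 : 0 < s := by linarith
  have hc0 : 0 ≤ c := by positivity
  have hintcf : Integrable (fun ω => c * f ω + (1 - 2 / s) * ε ^ 2) μ :=
    (hint2.const_mul c).add (integrable_const _)
  have hle : (fun ω => (ξ ω) ^ 2) ≤ᵐ[μ] fun ω => c * f ω + (1 - 2 / s) * ε ^ 2 :=
    Filter.Eventually.of_forall fun ω => sakhanenko_ptwise hε hs (ξ ω)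
  have h1 := condExp_mono (m := G) hint1 hintcf hle
  have h2 : μ[fun ω => c * f ω + (1 - 2 / s) * ε ^ 2|G]
      =ᵐ[μ] fun ω => c * (μ[f|G]) ω + (1 - 2 / s) * ε ^ 2 := by
    have ha := condExp_add (μ := μ) (m := G) (hint2.const_mul c)
      (integrable_const ((1 - 2 / s) * ε ^ 2))
    have hsmul : μ[fun ω => c * f ω|G] =ᵐ[μ] fun ω => c * (μ[f|G]) ω := by
      exact condExp_smul (μ := μ) (m := G) c f
    have hconst : μ[fun _ : Ω => (1 - 2 / s) * ε ^ 2|G]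
        = fun _ : Ω => (1 - 2 / s) * ε ^ 2 := condExp_const hG _
    filter_upwards [ha, hsmul] with ω haω hsω
    simp only [Pi.add_apply] at haω
    have heq : (fun ω => c * f ω + (1 - 2 / s) * ε ^ 2)
        = ((fun ω => c * f ω) + fun _ : Ω => (1 - 2 / s) * ε ^ 2) := rfl
    rw [heq, haω, hsω, hconst]
  have hε' : ε ^ (s - 2) * ε ^ (2 - s) = 1 := by
    rw [← Real.rpow_add hε]
    norm_num
  filter_upwards [h1, h2, hyp] with ω h1ω h2ω hypω
  rw [h2ω] at h1ω
  set Y := (μ[fun ω => (ξ ω) ^ 2|G]) ω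
  set F := (μ[f|G]) ω
  have hFY : c * F ≤ 2 / s * Y := by
    calc c * F ≤ c * (ε ^ (s - 2) * Y) := mul_le_mul_of_nonneg_left hypω hc0
      _ = 2 / s * (ε ^ (s - 2) * ε ^ (2 - s)) * Y := by rw [hc]; ring
      _ = 2 / s * Y := by rw [hε']; ring
  have : Y ≤ 2 / s * Y + (1 - 2 / s) * ε ^ 2 := by linarith
  have hpos : 0 < 1 - 2 / s := by
    have : 2 / s < 1 := by rw [div_lt_one hs0]; linarith
    linarith
  nlinarith
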